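/- The QPE order is preserved and reflected by tensor products: for density matrices ρ₁, σ₁ on M_{n₁}(ℂ) and ρ₂, σ₂ on M_{n₂}(ℂ), the Kronecker product satisfies ρ₁ ⊗ ρ₂ ⊑ σ₁ ⊗ σ₂ if and only if ρ₁ ⊑ σ₁ and ρ₂ ⊑ σ₂. -/

import Mathlib

open Matrix
open scoped ComplexOrder

/-- The largest eigenvalue of a matrix (for a positive semidefinite matrix this
equals the operator norm). -/
noncomputable def maxEig {m : Type*} [Fintype m] (A : Matrix m m ℂ) : ℝ :=
  sSup {a : ℝ | ∃ v : m → ℂ, v ≠ 0 ∧ A.mulVec v = (a : ℂ) • v}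

/-- A density matrix: positive semidefinite with trace 1. -/
def IsDensity {m : Type*} [Fintype m] (ρ : Matrix m m ℂ) : Prop :=
  ρ.PosSemidef ∧ ρ.trace = 1

/-- The quantum positive evidence (QPE) order: ρ ⊑ σ iff σ⁺•ρ - ρ⁺•σ ≥ 0. -/
def QPE {m : Type*} [Fintype m] (ρ σ : Matrix m m ℂ) : Prop :=
  (maxEig σ • ρ - maxEig ρ • σ).PosSemidef

section Helpers

variable {m l : Type*} [Fintype m] [DecidableEq m] [Fintype l] [DecidableEq l]

def eigSet (A : Matrix m m ℂ) : Set ℝ :=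
  {a : ℝ | ∃ v : m → ℂ, v ≠ 0 ∧ A.mulVec v = (a : ℂ) • v}

lemma maxEig_def (A : Matrix m m ℂ) : maxEig A = sSup (eigSet A) := rfl

lemma coe_smul_eq_real_smul (r : ℝ) (w : m → ℂ) : (r : ℂ) • w = r • w := by
  funext i
  simp [Complex.real_smul]

lemma eigSet_eq {A : Matrix m m ℂ} (hA : A.IsHermitian) :
    eigSet A = Set.range hA.eigenvalues := by
  ext a
  constructor
  · rintro ⟨v, hv, hAv⟩
    set U : Matrix m m ℂ := (hA.eigenvectorUnitary : Matrix m m ℂ) with hUdef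
    have hU1 : U * star U = 1 := (Matrix.mem_unitaryGroup_iff).mp hA.eigenvectorUnitary.2
    have hU2 : star U * U = 1 := (Matrix.mem_unitaryGroup_iff').mp hA.eigenvectorUnitary.2
    set w : m → ℂ := star U *ᵥ v with hw
    have hwv : U *ᵥ w = v := by
      rw [hw, mulVec_mulVec, hU1, one_mulVec]
    have hw0 : w ≠ 0 := by
      intro h
      apply hv
      rw [← hwv, h, mulVec_zero]
    have hDw : diagonal (RCLike.ofReal ∘ hA.eigenvalues) *ᵥ w = (a : ℂ) • w := by
      have h1 : A *ᵥ v = (a : ℂ) • v := hAv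
      rw [hA.spectral_theorem, Unitary.conjStarAlgAut_apply] at h1
      have h2 := congrArg (fun x => star U *ᵥ x) h1
      simp only [← mulVec_mulVec, mulVec_smul] at h2 ⊢
      rw [mulVec_mulVec, mulVec_mulVec, ← hUdef, hU2, one_mul] at h2
      exact h2
    obtain ⟨i, hi⟩ := Function.ne_iff.mp hw0
    have h3 := congrFun hDw i
    rw [mulVec_diagonal] at h3
    have h5 : (hA.eigenvalues i : ℂ) * w i = (a : ℂ) * w i := by
      simpa [Pi.smul_apply, smul_eq_mul] using h3
    have h4 : ((hA.eigenvalues i : ℂ)) = (a : ℂ) := mul_right_cancel₀ hi h5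
    exact ⟨i, by exact_mod_cast h4⟩
  · rintro ⟨i, rfl⟩
    refine ⟨⇑(hA.eigenvectorBasis i), ?_, ?_⟩
    · intro h
      apply hA.eigenvectorBasis.orthonormal.ne_zero i
      ext j
      exact congrFun h j
    · rw [hA.mulVec_eigenvectorBasis, coe_smul_eq_real_smul]

lemma eigSet_finite {A : Matrix m m ℂ} (hA : A.IsHermitian) : (eigSet A).Finite := by
  rw [eigSet_eq hA]; exact Set.finite_range _

lemma maxEig_mem {A : Matrix m m ℂ} (hA : A.IsHermitian) [Nonempty m] :
    maxEig A ∈ eigSet A := by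
  rw [maxEig_def]
  refine Set.Nonempty.csSup_mem ?_ (eigSet_finite hA)
  rw [eigSet_eq hA]
  exact Set.range_nonempty _

lemma le_maxEig {A : Matrix m m ℂ} (hA : A.IsHermitian) {a : ℝ} (ha : a ∈ eigSet A) :
    a ≤ maxEig A :=
  le_csSup (eigSet_finite hA).bddAbove ha

lemma eigSet_nonneg {A : Matrix m m ℂ} (hA : A.PosSemidef) {a : ℝ} (ha : a ∈ eigSet A) :
    0 ≤ a := by
  rw [eigSet_eq hA.1] at ha
  obtain ⟨i, rfl⟩ := ha
  exact hA.eigenvalues_nonneg i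

lemma maxEig_nonneg {A : Matrix m m ℂ} (hA : A.PosSemidef) [Nonempty m] :
    0 ≤ maxEig A :=
  eigSet_nonneg hA (maxEig_mem hA.1)

end Helpers

section Helpers2

open Kronecker

variable {m l : Type*} [Fintype m] [DecidableEq m] [Fintype l] [DecidableEq l]

lemma smul_isHermitian (r : ℝ) {A : Matrix m m ℂ} (hA : A.IsHermitian) :
    (r • A).IsHermitian :=
  Matrix.IsHermitian.ext fun i j => by
    simp only [Matrix.smul_apply, Complex.real_smul, star_mul', Complex.star_def,
      Complex.conj_ofReal, hA.apply, mul_comm]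

lemma smul_posSemidef {r : ℝ} (hr : 0 ≤ r) {A : Matrix m m ℂ} (hA : A.PosSemidef) :
    (r • A).PosSemidef := by
  refine .of_dotProduct_mulVec_nonneg (smul_isHermitian r hA.1) fun x => ?_
  rw [smul_mulVec, dotProduct_smul, Complex.real_smul]
  exact mul_nonneg (Complex.zero_le_real.mpr hr) (hA.dotProduct_mulVec_nonneg x)

lemma rayleigh_psd {A : Matrix m m ℂ} (hA : A.IsHermitian) [Nonempty m] :
    (maxEig A • (1 : Matrix m m ℂ) - A).PosSemidef := by
  have hM : (maxEig A • (1 : Matrix m m ℂ) - A).IsHermitian :=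
    (smul_isHermitian _ Matrix.isHermitian_one).sub hA
  apply hM.posSemidef_iff_eigenvalues_nonneg.mpr
  intro i
  have hv := hM.mulVec_eigenvectorBasis i
  set μ : ℝ := hM.eigenvalues i with hμ
  set v : m → ℂ := ⇑(hM.eigenvectorBasis i) with hvdef
  have hv0 : v ≠ 0 := by
    intro h
    apply hM.eigenvectorBasis.orthonormal.ne_zero i
    ext j
    exact congrFun h j
  have hAv : A *ᵥ v = ((maxEig A - μ : ℝ) : ℂ) • v := by
    have h1 : (maxEig A • (1 : Matrix m m ℂ) - A) *ᵥ v = μ • v := hv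
    rw [Matrix.sub_mulVec, smul_mulVec, Matrix.one_mulVec] at h1
    funext j
    have h2 := congrFun h1 j
    simp only [Pi.sub_apply, Pi.smul_apply, Complex.real_smul, smul_eq_mul] at h2 ⊢
    push_cast
    linear_combination -h2
  have : (maxEig A - μ) ∈ eigSet A := ⟨v, hv0, hAv⟩
  have := le_maxEig hA this
  exact (by linarith : (0:ℝ) ≤ μ)

lemma conjTranspose_kron (A : Matrix m m ℂ) (B : Matrix l l ℂ) :
    (A ⊗ₖ B)ᴴ = Aᴴ ⊗ₖ Bᴴ := by
  ext ⟨i, j⟩ ⟨k, r⟩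
  simp [Matrix.conjTranspose_apply, Matrix.kroneckerMap_apply, star_mul', mul_comm]

lemma kron_posSemidef {A : Matrix m m ℂ} {B : Matrix l l ℂ}
    (hA : A.PosSemidef) (hB : B.PosSemidef) : (A ⊗ₖ B).PosSemidef := by
  exact hA.kronecker hB

lemma sub_kron (A A' : Matrix m m ℂ) (B : Matrix l l ℂ) :
    (A - A') ⊗ₖ B = A ⊗ₖ B - A' ⊗ₖ B := by
  ext ⟨i, j⟩ ⟨k, r⟩
  simp [Matrix.kroneckerMap_apply, sub_mul]

lemma kron_sub (A : Matrix m m ℂ) (B B' : Matrix l l ℂ) :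
    A ⊗ₖ (B - B') = A ⊗ₖ B - A ⊗ₖ B' := by
  ext ⟨i, j⟩ ⟨k, r⟩
  simp [Matrix.kroneckerMap_apply, mul_sub]

def vecKron (x : m → ℂ) (y : l → ℂ) : m × l → ℂ := fun p => x p.1 * y p.2

lemma vecKron_ne_zero {x : m → ℂ} {y : l → ℂ} (hx : x ≠ 0) (hy : y ≠ 0) :
    vecKron x y ≠ 0 := by
  obtain ⟨i, hi⟩ := Function.ne_iff.mp hx
  obtain ⟨j, hj⟩ := Function.ne_iff.mp hy
  intro h
  have := congrFun h (i, j)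
  exact mul_ne_zero hi hj (by simpa [vecKron] using this)

lemma mulVec_vecKron (A : Matrix m m ℂ) (B : Matrix l l ℂ) (x : m → ℂ) (y : l → ℂ) :
    (A ⊗ₖ B) *ᵥ vecKron x y = vecKron (A *ᵥ x) (B *ᵥ y) := by
  funext ⟨i, j⟩
  show ∑ p : m × l, (A i p.1 * B j p.2) * (x p.1 * y p.2)
      = (∑ k, A i k * x k) * (∑ r, B j r * y r)
  rw [Finset.sum_mul_sum, Fintype.sum_prod_type]
  exact Finset.sum_congr rfl fun k _ => Finset.sum_congr rfl fun r _ => by ring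

lemma dot_kron (M₁ : Matrix m m ℂ) (M₂ : Matrix l l ℂ) (x : m → ℂ) (y : l → ℂ) :
    star (vecKron x y) ⬝ᵥ (M₁ ⊗ₖ M₂) *ᵥ vecKron x y
      = (star x ⬝ᵥ M₁ *ᵥ x) * (star y ⬝ᵥ M₂ *ᵥ y) := by
  rw [mulVec_vecKron]
  show ∑ p : m × l, star (x p.1 * y p.2) * ((M₁ *ᵥ x) p.1 * (M₂ *ᵥ y) p.2)
      = (∑ k, star (x k) * (M₁ *ᵥ x) k) * (∑ r, star (y r) * (M₂ *ᵥ y) r)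
  rw [Finset.sum_mul_sum, Fintype.sum_prod_type]
  exact Finset.sum_congr rfl fun k _ => Finset.sum_congr rfl fun r _ => by
    simp only [star_mul']; ring

lemma maxEig_kron {A : Matrix m m ℂ} {B : Matrix l l ℂ}
    (hA : A.PosSemidef) (hB : B.PosSemidef) [Nonempty m] [Nonempty l] :
    maxEig (A ⊗ₖ B) = maxEig A * maxEig B := by
  have hABh : (A ⊗ₖ B).IsHermitian := (kron_posSemidef hA hB).1
  apply le_antisymm
  · -- every eigenvalue of A ⊗ B is ≤ maxEig A * maxEig B
    obtain ⟨u, hu0, hu⟩ := maxEig_mem hABh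
    set c := maxEig (A ⊗ₖ B)
    have key : ((maxEig A * maxEig B) • (1 : Matrix (m × l) (m × l) ℂ) - A ⊗ₖ B)
        = (maxEig A • (1 : Matrix m m ℂ) - A) ⊗ₖ (maxEig B • (1 : Matrix l l ℂ))
          + A ⊗ₖ (maxEig B • (1 : Matrix l l ℂ) - B) := by
      rw [sub_kron, kron_sub, Matrix.smul_kronecker,
        Matrix.kronecker_smul, Matrix.kronecker_smul, Matrix.one_kronecker_one]
      module
    have hP : ((maxEig A * maxEig B) • (1 : Matrix (m × l) (m × l) ℂ) - A ⊗ₖ B).PosSemidef := by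
      rw [key]
      exact ((kron_posSemidef (rayleigh_psd hA.1) (smul_posSemidef (maxEig_nonneg hB)
        Matrix.PosSemidef.one)).add
        (kron_posSemidef hA (rayleigh_psd hB.1)))
    have h2 := hP.dotProduct_mulVec_nonneg u
    rw [Matrix.sub_mulVec, smul_mulVec, Matrix.one_mulVec, hu, dotProduct_sub,
      dotProduct_smul, dotProduct_smul] at h2
    have hq : (0 : ℂ) < star u ⬝ᵥ u := by
      refine lt_of_le_of_ne (dotProduct_star_self_nonneg u) ?_
      intro h
      exact hu0 (dotProduct_star_self_eq_zero.mp h.symm)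
    by_contra hcon
    push_neg at hcon
    have this1 : (maxEig A * maxEig B) • (star u ⬝ᵥ u) - (c : ℂ) • (star u ⬝ᵥ u)
        = -(((c - maxEig A * maxEig B : ℝ) : ℂ) * (star u ⬝ᵥ u)) := by
      simp only [Complex.real_smul, smul_eq_mul]
      push_cast
      ring
    rw [this1] at h2
    have h3 : 0 < ((c - maxEig A * maxEig B : ℝ) : ℂ) * (star u ⬝ᵥ u) :=
      mul_pos (Complex.zero_lt_real.mpr (by linarith)) hq
    exact (neg_nonneg.mp h2).not_gt h3
  · -- maxEig A * maxEig B is an eigenvalue of A ⊗ B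
    obtain ⟨v, hv0, hv⟩ := maxEig_mem hA.1
    obtain ⟨w, hw0, hw⟩ := maxEig_mem hB.1
    apply le_maxEig hABh
    refine ⟨vecKron v w, vecKron_ne_zero hv0 hw0, ?_⟩
    rw [mulVec_vecKron, hv, hw]
    funext ⟨i, j⟩
    simp only [vecKron, Pi.smul_apply, smul_eq_mul]
    push_cast
    ring

end Helpers2

section Main

open Kronecker

variable {m l : Type*} [Fintype m] [DecidableEq m] [Fintype l] [DecidableEq l]

lemma IsDensity.nonempty {ρ : Matrix m m ℂ} (h : IsDensity ρ) : Nonempty m := by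
  by_contra hn
  rw [not_nonempty_iff] at hn
  have h2 := h.2
  rw [Matrix.trace] at h2
  simp [Finset.univ_eq_empty] at h2

lemma IsDensity.maxEig_pos {ρ : Matrix m m ℂ} (h : IsDensity ρ) : 0 < maxEig ρ := by
  haveI := h.nonempty
  have hne : ρ ≠ 0 := fun h0 => by rw [h0] at h; simpa using h.2
  obtain ⟨v, t, ht, hv, hvt⟩ := h.1.1.exists_eigenvector_of_ne_zero hne
  have htmem : t ∈ eigSet ρ := ⟨v, hv, by rw [hvt, coe_smul_eq_real_smul]⟩
  have h0 : 0 ≤ t := eigSet_nonneg h.1 htmem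
  have hle := le_maxEig h.1.1 htmem
  have : 0 < t := lt_of_le_of_ne h0 (Ne.symm ht)
  linarith

lemma psd_dot_real {M : Matrix m m ℂ} (hM : M.PosSemidef) (x : m → ℂ) :
    ∃ r : ℝ, 0 ≤ r ∧ star x ⬝ᵥ M *ᵥ x = (r : ℂ) := by
  have h := hM.dotProduct_mulVec_nonneg x
  rw [Complex.nonneg_iff] at h
  exact ⟨(star x ⬝ᵥ M *ᵥ x).re, h.1, (Complex.ext (by simp) (by simp [← h.2])).symm⟩

lemma dot_self_real (x : m → ℂ) :
    ∃ t : ℝ, 0 ≤ t ∧ star x ⬝ᵥ x = (t : ℂ) := by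
  obtain ⟨t, ht, hte⟩ := psd_dot_real (Matrix.PosSemidef.one (n := m) (R := ℂ)) x
  rw [Matrix.one_mulVec] at hte
  exact ⟨t, ht, hte⟩

lemma dot_sub_smul (e f : ℝ) (M N : Matrix m m ℂ) (x : m → ℂ) :
    star x ⬝ᵥ (e • M - f • N) *ᵥ x
      = (e : ℂ) * (star x ⬝ᵥ M *ᵥ x) - (f : ℂ) * (star x ⬝ᵥ N *ᵥ x) := by
  rw [Matrix.sub_mulVec, dotProduct_sub, smul_mulVec, smul_mulVec,
    dotProduct_smul, dotProduct_smul, Complex.real_smul, Complex.real_smul]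

lemma rayleigh_bound {A : Matrix m m ℂ} (hA : A.PosSemidef) [Nonempty m] (x : m → ℂ)
    {r t : ℝ} (hr : star x ⬝ᵥ A *ᵥ x = (r : ℂ)) (ht : star x ⬝ᵥ x = (t : ℂ)) :
    r ≤ maxEig A * t := by
  have h := (rayleigh_psd hA.1).dotProduct_mulVec_nonneg x
  rw [Matrix.sub_mulVec, dotProduct_sub, smul_mulVec, Matrix.one_mulVec,
    dotProduct_smul, Complex.real_smul, hr, ht] at h
  have heq : ((maxEig A * t - r : ℝ) : ℂ) = (maxEig A : ℂ) * (t : ℂ) - (r : ℂ) := by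
    push_cast; ring
  have := Complex.zero_le_real.mp (by rw [heq]; exact h)
  linarith

lemma qpe_snd {ρ₁ σ₁ : Matrix m m ℂ} {ρ₂ σ₂ : Matrix l l ℂ}
    (hρ₁ : IsDensity ρ₁) (hσ₁ : IsDensity σ₁) (hρ₂ : IsDensity ρ₂) (hσ₂ : IsDensity σ₂)
    (h : ((maxEig σ₁ * maxEig σ₂) • (ρ₁ ⊗ₖ ρ₂)
        - (maxEig ρ₁ * maxEig ρ₂) • (σ₁ ⊗ₖ σ₂)).PosSemidef) :
    QPE ρ₂ σ₂ := by
  haveI := hρ₁.nonempty; haveI := hρ₂.nonempty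
  have ha : 0 < maxEig ρ₁ := hρ₁.maxEig_pos
  have hc : 0 < maxEig σ₁ := hσ₁.maxEig_pos
  have hd : 0 ≤ maxEig σ₂ := maxEig_nonneg hσ₂.1
  have hb : 0 ≤ maxEig ρ₂ := maxEig_nonneg hρ₂.1
  obtain ⟨w, hw0, hw⟩ := maxEig_mem hσ₁.1.1
  refine .of_dotProduct_mulVec_nonneg ((smul_isHermitian _ hρ₂.1.1).sub (smul_isHermitian _ hσ₂.1.1)) fun x => ?_
  obtain ⟨q, hq0, hqe⟩ := psd_dot_real hρ₂.1 x
  obtain ⟨s, hs0, hse⟩ := psd_dot_real hσ₂.1 x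
  obtain ⟨r, hr0, hre⟩ := psd_dot_real hρ₁.1 w
  obtain ⟨t, ht0, hte⟩ := dot_self_real w
  have htpos : 0 < t := by
    rcases lt_or_eq_of_le ht0 with h' | h'
    · exact h'
    · exfalso
      apply hw0
      apply dotProduct_star_self_eq_zero.mp
      rw [hte, ← h', Complex.ofReal_zero]
  have hsw : star w ⬝ᵥ σ₁ *ᵥ w = ((maxEig σ₁ * t : ℝ) : ℂ) := by
    rw [hw, dotProduct_smul, hte]
    push_cast
    simp [smul_eq_mul]
  have hrat : r ≤ maxEig ρ₁ * t := rayleigh_bound hρ₁.1 w hre hte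
  have hmain := h.dotProduct_mulVec_nonneg (vecKron w x)
  rw [dot_sub_smul, dot_kron, dot_kron, hre, hqe, hsw, hse] at hmain
  have hmain' : 0 ≤ maxEig σ₁ * maxEig σ₂ * (r * q)
      - maxEig ρ₁ * maxEig ρ₂ * (maxEig σ₁ * t * s) := by
    apply Complex.zero_le_real.mp
    convert hmain using 1
    push_cast
    ring
  have hgoal : 0 ≤ maxEig σ₂ * q - maxEig ρ₂ * s := by
    nlinarith [mul_le_mul_of_nonneg_left hrat
        (mul_nonneg (mul_nonneg hc.le hd) hq0),
      mul_pos (mul_pos ha hc) htpos, mul_nonneg hb hs0, mul_nonneg hd hq0]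
  rw [dot_sub_smul, hqe, hse]
  have heq2 : ((maxEig σ₂ : ℂ) * (q : ℂ) - (maxEig ρ₂ : ℂ) * (s : ℂ))
      = ((maxEig σ₂ * q - maxEig ρ₂ * s : ℝ) : ℂ) := by push_cast; ring
  rw [heq2]
  exact Complex.zero_le_real.mpr hgoal

end Main

open Kronecker in
theorem stmt10 {n₁ n₂ : ℕ} (ρ₁ σ₁ : Matrix (Fin n₁) (Fin n₁) ℂ)
    (ρ₂ σ₂ : Matrix (Fin n₂) (Fin n₂) ℂ)
    (hρ₁ : IsDensity ρ₁) (hσ₁ : IsDensity σ₁)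
    (hρ₂ : IsDensity ρ₂) (hσ₂ : IsDensity σ₂) :
    QPE (ρ₁ ⊗ₖ ρ₂) (σ₁ ⊗ₖ σ₂) ↔ QPE ρ₁ σ₁ ∧ QPE ρ₂ σ₂ := by
  haveI h1 : Nonempty (Fin n₁) := hρ₁.nonempty
  haveI h2 : Nonempty (Fin n₂) := hρ₂.nonempty
  unfold QPE
  rw [maxEig_kron hσ₁.1 hσ₂.1, maxEig_kron hρ₁.1 hρ₂.1]
  constructor
  · intro h
    refine ⟨?_, qpe_snd hρ₁ hσ₁ hρ₂ hσ₂ h⟩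
    have h' := h.submatrix (Prod.swap : Fin n₂ × Fin n₁ → Fin n₁ × Fin n₂)
    have hswap : ((maxEig σ₁ * maxEig σ₂) • (ρ₁ ⊗ₖ ρ₂)
          - (maxEig ρ₁ * maxEig ρ₂) • (σ₁ ⊗ₖ σ₂)).submatrix Prod.swap Prod.swap
        = (maxEig σ₂ * maxEig σ₁) • (ρ₂ ⊗ₖ ρ₁)
          - (maxEig ρ₂ * maxEig ρ₁) • (σ₂ ⊗ₖ σ₁) := by
      ext ⟨i, j⟩ ⟨k, r⟩
      simp only [Matrix.submatrix_apply, Matrix.sub_apply, Matrix.smul_apply,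
        Matrix.kroneckerMap_apply, Prod.swap_prod_mk, Complex.real_smul]
      push_cast
      ring
    rw [hswap] at h'
    exact qpe_snd hρ₂ hσ₂ hρ₁ hσ₁ h'
  · rintro ⟨hq1, hq2⟩
    have key : (maxEig σ₁ * maxEig σ₂) • (ρ₁ ⊗ₖ ρ₂) - (maxEig ρ₁ * maxEig ρ₂) • (σ₁ ⊗ₖ σ₂)
        = (maxEig σ₁ • ρ₁ - maxEig ρ₁ • σ₁) ⊗ₖ (maxEig σ₂ • ρ₂)
          + (maxEig ρ₁ • σ₁) ⊗ₖ (maxEig σ₂ • ρ₂ - maxEig ρ₂ • σ₂) := by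
      rw [sub_kron, kron_sub]
      simp only [Matrix.smul_kronecker, Matrix.kronecker_smul]
      module
    rw [key]
    exact (kron_posSemidef hq1 (smul_posSemidef (maxEig_nonneg hσ₂.1) hρ₂.1)).add
      (kron_posSemidef (smul_posSemidef (hρ₁.maxEig_pos).le hσ₁.1) hq2)
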